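/- Let A ⊆ ℝ^p be star-shaped about the origin (t·δ ∈ A whenever δ ∈ A and t ∈ [0,1]) and let q̄ > 0 satisfy q̄·(1/n)∑_{i=1}^n w_i·|x_i'δ|³ ≤ ((1/n)∑_{i=1}^n w_i·(x_i'δ)²)^{3/2} for every δ ∈ A. Then for every δ ∈ A, Λ(η₀ + δ) − Λ(η₀) − ∇Λ(η₀)'δ ≥ min{ (1/3)·‖√w_i·x_i'δ‖²_{2,n}, (q̄/3)·‖√w_i·x_i'δ‖_{2,n} }. -/

import Mathlib

open Finset

/-- The logistic link function `G(t) = exp t / (1 + exp t)`. -/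
noncomputable def logistic (t : ℝ) : ℝ := Real.exp t / (1 + Real.exp t)

/-- Inner product `x_i'η` of the `i`-th design vector with `η`. -/
def xdot {n p : ℕ} (x : Fin n → Fin p → ℝ) (η : Fin p → ℝ) (i : Fin n) : ℝ :=
  ∑ j, x i j * η j

/-- Average logistic negative log-likelihood
`Λ(η) = (1/n)∑ᵢ [log(1+exp(x_i'η)) − y_i·(x_i'η)]`. -/
noncomputable def Lam {n p : ℕ} (x : Fin n → Fin p → ℝ) (y : Fin n → ℝ)
    (η : Fin p → ℝ) : ℝ :=
  (1 / (n : ℝ)) * ∑ i, (Real.log (1 + Real.exp (xdot x η i)) - y i * xdot x η i)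

/-- Gradient of `Λ`: `∇Λ(η) = (1/n)∑ᵢ (G(x_i'η) − y_i)·x_i`. -/
noncomputable def gradLam {n p : ℕ} (x : Fin n → Fin p → ℝ) (y : Fin n → ℝ)
    (η : Fin p → ℝ) (j : Fin p) : ℝ :=
  (1 / (n : ℝ)) * ∑ i, (logistic (xdot x η i) - y i) * x i j

/-- Sup-norm `‖∇Λ(η)‖_∞` of the gradient of `Λ`. -/
noncomputable def gradLamSup {n p : ℕ} (x : Fin n → Fin p → ℝ) (y : Fin n → ℝ)
    (η : Fin p → ℝ) : ℝ :=
  ⨆ j : Fin p, |gradLam x y η j|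

/-- The logistic weights `w_i = G(x_i'η₀)·(1 − G(x_i'η₀))`. -/
noncomputable def wgt {n p : ℕ} (x : Fin n → Fin p → ℝ) (η₀ : Fin p → ℝ) (i : Fin n) : ℝ :=
  logistic (xdot x η₀ i) * (1 - logistic (xdot x η₀ i))

/-- Weighted prediction norm `‖√w_i·x_i'δ‖_{2,n} = ((1/n)∑ᵢ w_i (x_i'δ)²)^{1/2}`. -/
noncomputable def predNorm {n p : ℕ} (x : Fin n → Fin p → ℝ) (w : Fin n → ℝ)
    (δ : Fin p → ℝ) : ℝ :=
  Real.sqrt ((1 / (n : ℝ)) * ∑ i, w i * xdot x δ i ^ 2)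

/-- Support of a coefficient vector. -/
noncomputable def supp {p : ℕ} (η : Fin p → ℝ) : Finset (Fin p) :=
  Finset.univ.filter (fun j => η j ≠ 0)

/-- ℓ1 norm of a vector in `ℝ^p`. -/
def l1norm {p : ℕ} (δ : Fin p → ℝ) : ℝ := ∑ j, |δ j|

/-- The restricted cone `Δ_c̄ = {δ : ‖δ_{T^c}‖₁ ≤ c̄·‖δ_T‖₁}` for a support set `T`. -/
noncomputable def inCone {p : ℕ} (T : Finset (Fin p)) (cbar : ℝ) (δ : Fin p → ℝ) : Prop :=
  ∑ j ∈ Tᶜ, |δ j| ≤ cbar * ∑ j ∈ T, |δ j|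



noncomputable def ll (t : ℝ) : ℝ := Real.log (1 + Real.exp t)

lemma one_add_exp_pos (t : ℝ) : (0:ℝ) < 1 + Real.exp t := by positivity

lemma logistic_pos (t : ℝ) : 0 < logistic t := by
  unfold logistic; positivity

lemma logistic_lt_one (t : ℝ) : logistic t < 1 := by
  unfold logistic
  rw [div_lt_one (one_add_exp_pos t)]; linarith

lemma wpos (t : ℝ) : 0 < logistic t * (1 - logistic t) :=
  mul_pos (logistic_pos t) (by linarith [logistic_lt_one t])

lemma weq (t : ℝ) : logistic t * (1 - logistic t) = Real.exp t / (1 + Real.exp t)^2 := by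
  unfold logistic
  have h := (one_add_exp_pos t).ne'
  field_simp
  ring

lemma hasDerivAt_ll (t : ℝ) : HasDerivAt ll (logistic t) t := by
  have h := ((Real.hasDerivAt_exp t).const_add 1).log (one_add_exp_pos t).ne'
  exact h

lemma hasDerivAt_logistic (t : ℝ) :
    HasDerivAt logistic (logistic t * (1 - logistic t)) t := by
  have h := (Real.hasDerivAt_exp t).div ((Real.hasDerivAt_exp t).const_add 1)
    (one_add_exp_pos t).ne'
  have e : (Real.exp t * (1 + Real.exp t) - Real.exp t * Real.exp t) / (1 + Real.exp t)^2
      = logistic t * (1 - logistic t) := by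
    rw [weq]; congr 1; ring
  rw [e] at h
  exact h

lemma wshift (a u : ℝ) (hu : 0 ≤ u) :
    logistic a * (1 - logistic a) * (1 - u) ≤ logistic (a+u) * (1 - logistic (a+u)) := by
  rw [weq, weq]
  have hA : 0 < Real.exp a := Real.exp_pos a
  have hU : 1 ≤ Real.exp u := by nlinarith [Real.add_one_le_exp u]
  set A := Real.exp a with hAdef
  set U := Real.exp u with hUdef
  have hexp : Real.exp (a+u) = A * U := Real.exp_add a u
  rw [hexp]
  have h1 : U * (1 - u) ≤ 1 := by
    have h2 : 1 - u ≤ Real.exp (-u) := by nlinarith [Real.add_one_le_exp (-u)]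
    have h3 : U * Real.exp (-u) = 1 := by rw [hUdef, ← Real.exp_add]; simp
    nlinarith [Real.exp_pos (-u)]
  have key : (1-u) * (1+A*U)^2 ≤ U*(1+A)^2 := by
    rcases le_or_gt (1-u) 0 with h|h
    · have h4 : (0:ℝ) ≤ U*(1+A)^2 := by positivity
      nlinarith [sq_nonneg (1+A*U)]
    · have e1 : (1+A*U) ≤ U*(1+A) := by nlinarith
      have e2 : (1+A*U)^2 ≤ (U*(1+A))^2 := by nlinarith [mul_pos hA (by linarith : (0:ℝ) < U)]
      calc (1-u)*(1+A*U)^2 ≤ (1-u)*(U*(1+A))^2 := by nlinarith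
        _ = (U*(1-u))*(U*(1+A)^2) := by ring
        _ ≤ 1*(U*(1+A)^2) := by
            have : (0:ℝ) ≤ U*(1+A)^2 := by positivity
            nlinarith
        _ = U*(1+A)^2 := one_mul _
  rw [div_mul_eq_mul_div, div_le_div_iff₀ (by positivity) (by positivity)]
  nlinarith [key, hA.le]


lemma hasDerivAt_logistic_shift (a v : ℝ) :
    HasDerivAt (fun v : ℝ => logistic (a+v)) (logistic (a+v)*(1-logistic (a+v))) v := by
  have h := (hasDerivAt_logistic (a+v)).comp v ((hasDerivAt_id v).const_add a)
  simp only [mul_one] at h; exact h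

lemma hasDerivAt_ll_shift (a v : ℝ) :
    HasDerivAt (fun v : ℝ => ll (a+v)) (logistic (a+v)) v := by
  have h := (hasDerivAt_ll (a+v)).comp v ((hasDerivAt_id v).const_add a)
  simp only [mul_one] at h; exact h

lemma F1_nonneg (a : ℝ) {u : ℝ} (hu : 0 ≤ u) :
    logistic a * (1 - logistic a) * (u - u^2/2) ≤ logistic (a+u) - logistic a := by
  set w := logistic a * (1 - logistic a) with hw
  set f : ℝ → ℝ := fun v => logistic (a+v) - logistic a - w*(v - v^2/2) with hf
  have hder : ∀ v : ℝ, HasDerivAt f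
      (logistic (a+v)*(1-logistic (a+v)) - w*(1-v)) v := by
    intro v
    have h1 := hasDerivAt_logistic_shift a v
    have h2 : HasDerivAt (fun v : ℝ => w*(v - v^2/2)) (w*(1-v)) v := by
      have h3 : HasDerivAt (fun v : ℝ => v - v^2/2) (1 - v) v := by
        have := (hasDerivAt_id v).sub ((hasDerivAt_pow 2 v).div_const 2)
        refine this.congr_deriv ?_
        push_cast; ring
      exact h3.const_mul w
    exact (h1.sub_const (logistic a)).sub h2
  have hmono : MonotoneOn f (Set.Ici 0) := by
    apply monotoneOn_of_deriv_nonneg (convex_Ici 0)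
    · have hdiff : Differentiable ℝ f := fun v => (hder v).differentiableAt
      exact hdiff.continuous.continuousOn
    · exact fun v _ => (hder v).differentiableAt.differentiableWithinAt
    · intro v hv
      rw [interior_Ici] at hv
      rw [(hder v).deriv]
      have := wshift a v (le_of_lt hv)
      rw [← hw] at this
      linarith
  have h0 : f 0 = 0 := by simp [hf]
  have := hmono (Set.self_mem_Ici) (Set.mem_Ici.mpr hu) hu
  rw [h0] at this
  simp only [hf] at this
  linarith

lemma F_nonneg (a : ℝ) {u : ℝ} (hu : 0 ≤ u) :
    logistic a * (1 - logistic a) * (u^2/2 - u^3/6) ≤ ll (a+u) - ll a - logistic a * u := by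
  set w := logistic a * (1 - logistic a) with hw
  set f : ℝ → ℝ := fun v => ll (a+v) - ll a - logistic a * v - w*(v^2/2 - v^3/6) with hf
  have hder : ∀ v : ℝ, HasDerivAt f
      (logistic (a+v) - logistic a - w*(v - v^2/2)) v := by
    intro v
    have h1 := hasDerivAt_ll_shift a v
    have h2 : HasDerivAt (fun v : ℝ => logistic a * v) (logistic a) v := by
      simpa using (hasDerivAt_id v).const_mul (logistic a)
    have h3 : HasDerivAt (fun v : ℝ => w*(v^2/2 - v^3/6)) (w*(v - v^2/2)) v := by
      have h4 : HasDerivAt (fun v : ℝ => v^2/2 - v^3/6) (v - v^2/2) v := by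
        have := ((hasDerivAt_pow 2 v).div_const 2).sub ((hasDerivAt_pow 3 v).div_const 6)
        refine this.congr_deriv ?_
        push_cast; ring
      exact h4.const_mul w
    exact ((h1.sub_const (ll a)).sub h2).sub h3
  have hmono : MonotoneOn f (Set.Ici 0) := by
    apply monotoneOn_of_deriv_nonneg (convex_Ici 0)
    · have hdiff : Differentiable ℝ f := fun v => (hder v).differentiableAt
      exact hdiff.continuous.continuousOn
    · exact fun v _ => (hder v).differentiableAt.differentiableWithinAt
    · intro v hv
      rw [interior_Ici] at hv
      rw [(hder v).deriv]
      have := F1_nonneg a (le_of_lt hv)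
      rw [← hw] at this
      linarith
  have h0 : f 0 = 0 := by simp [hf]
  have := hmono (Set.self_mem_Ici) (Set.mem_Ici.mpr hu) hu
  rw [h0] at this
  simp only [hf] at this
  linarith

lemma logistic_neg (t : ℝ) : logistic (-t) = 1 - logistic t := by
  unfold logistic
  rw [Real.exp_neg]
  have h1 := (Real.exp_pos t).ne'
  have h2 := (one_add_exp_pos t).ne'
  field_simp
  ring

lemma ll_neg (t : ℝ) : ll (-t) = ll t - t := by
  unfold ll
  have h1 : 1 + Real.exp (-t) = (1 + Real.exp t) / Real.exp t := by
    rw [Real.exp_neg]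
    field_simp
    ring
  rw [h1, Real.log_div (one_add_exp_pos t).ne' (Real.exp_ne_zero t), Real.log_exp]

lemma key_ineq (a u : ℝ) :
    logistic a * (1 - logistic a) * (u^2/2 - |u|^3/6) ≤ ll (a+u) - ll a - logistic a * u := by
  rcases le_or_gt 0 u with hu|hu
  · rw [abs_of_nonneg hu]; exact F_nonneg a hu
  · have hv : 0 ≤ -u := by linarith
    have h := F_nonneg (-a) hv
    rw [abs_of_neg hu]
    have e1 : -a + -u = -(a+u) := by ring
    rw [e1, ll_neg, ll_neg, logistic_neg] at h
    nlinarith [h]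

lemma ll_convex : ConvexOn ℝ Set.univ ll := by
  have hd : deriv ll = logistic := funext fun t => (hasDerivAt_ll t).deriv
  apply convexOn_of_deriv2_nonneg convex_univ
  · exact (Differentiable.continuous fun t => (hasDerivAt_ll t).differentiableAt).continuousOn
  · exact fun t _ => (hasDerivAt_ll t).differentiableAt.differentiableWithinAt
  · rw [hd]
    exact fun t _ => (hasDerivAt_logistic t).differentiableAt.differentiableWithinAt
  · intro t _
    have : deriv (deriv ll) t = logistic t * (1 - logistic t) := by
      rw [hd]; exact (hasDerivAt_logistic t).deriv
    simp only [Function.iterate_succ_apply', Function.iterate_zero_apply]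
    rw [this]
    exact (wpos t).le

lemma D_scale (a u t : ℝ) (ht0 : 0 ≤ t) (ht1 : t ≤ 1) :
    ll (a + t*u) - ll a - logistic a * (t*u) ≤ t * (ll (a+u) - ll a - logistic a * u) := by
  have h := ll_convex.2 (Set.mem_univ (a+u)) (Set.mem_univ a) ht0 (by linarith : (0:ℝ) ≤ 1 - t)
    (by ring)
  simp only [smul_eq_mul] at h
  have e : t*(a+u) + (1-t)*a = a + t*u := by ring
  rw [e] at h
  nlinarith [h]

lemma xdot_add {n p : ℕ} (x : Fin n → Fin p → ℝ) (η δ : Fin p → ℝ) (i : Fin n) :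
    xdot x (η + δ) i = xdot x η i + xdot x δ i := by
  simp [xdot, mul_add, Finset.sum_add_distrib]

lemma xdot_smul {n p : ℕ} (x : Fin n → Fin p → ℝ) (t : ℝ) (δ : Fin p → ℝ) (i : Fin n) :
    xdot x (t • δ) i = t * xdot x δ i := by
  simp only [xdot, Pi.smul_apply, smul_eq_mul, Finset.mul_sum]
  exact Finset.sum_congr rfl fun j _ => by ring

lemma grad_dot {n p : ℕ} (x : Fin n → Fin p → ℝ) (y : Fin n → ℝ) (η₀ δ : Fin p → ℝ) :
    ∑ j, gradLam x y η₀ j * δ j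
      = (1/(n:ℝ)) * ∑ i, (logistic (xdot x η₀ i) - y i) * xdot x δ i := by
  unfold gradLam xdot
  simp only [Finset.mul_sum, Finset.sum_mul]
  rw [Finset.sum_comm]
  exact Finset.sum_congr rfl fun i _ => Finset.sum_congr rfl fun j _ => by ring

lemma Q_repr {n p : ℕ} (x : Fin n → Fin p → ℝ) (y : Fin n → ℝ) (η₀ δ : Fin p → ℝ) :
    Lam x y (η₀ + δ) - Lam x y η₀ - ∑ j, gradLam x y η₀ j * δ j
      = (1/(n:ℝ)) * ∑ i, (ll (xdot x η₀ i + xdot x δ i) - ll (xdot x η₀ i)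
          - logistic (xdot x η₀ i) * xdot x δ i) := by
  rw [grad_dot]
  unfold Lam ll
  rw [← mul_sub, ← mul_sub, ← Finset.sum_sub_distrib, ← Finset.sum_sub_distrib]
  congr 1
  refine Finset.sum_congr rfl fun i _ => ?_
  rw [xdot_add]
  ring

/-- Minoration Lemma: if `A` is star-shaped about the origin and the nonlinear impact
coefficient bound `q̄·(1/n)∑ᵢ w_i|x_i'δ|³ ≤ ((1/n)∑ᵢ w_i (x_i'δ)²)^{3/2}` holds on `A`,
then for every `δ ∈ A`,
`Λ(η₀+δ) − Λ(η₀) − ∇Λ(η₀)'δ ≥ min{(1/3)‖√w_i x_i'δ‖²_{2,n}, (q̄/3)‖√w_i x_i'δ‖_{2,n}}`. -/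
theorem minoration_lemma {n p : ℕ} (hn : 0 < n) (hp : 0 < p)
    (x : Fin n → Fin p → ℝ) (y : Fin n → ℝ) (hy : ∀ i, y i = 0 ∨ y i = 1)
    (η₀ : Fin p → ℝ)
    (A : Set (Fin p → ℝ))
    (hA : ∀ δ ∈ A, ∀ t ∈ Set.Icc (0 : ℝ) 1, t • δ ∈ A)
    (qbar : ℝ) (hqbar : 0 < qbar)
    (hq : ∀ δ ∈ A,
      qbar * ((1 / (n : ℝ)) * ∑ i, wgt x η₀ i * |xdot x δ i| ^ 3)
        ≤ ((1 / (n : ℝ)) * ∑ i, wgt x η₀ i * xdot x δ i ^ 2) ^ ((3 : ℝ) / 2)) :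
    ∀ δ ∈ A,
      min ((1 / 3) * predNorm x (wgt x η₀) δ ^ 2)
          ((qbar / 3) * predNorm x (wgt x η₀) δ)
        ≤ Lam x y (η₀ + δ) - Lam x y η₀ - ∑ j, gradLam x y η₀ j * δ j := by
  intro δ hδ
  have h1n : (0:ℝ) ≤ 1/(n:ℝ) := by positivity
  have hwnn : ∀ i : Fin n, 0 ≤ wgt x η₀ i := fun i => (wpos _).le
  -- core quadratic-cubic lower bound
  have core : ∀ d : Fin p → ℝ,
      ((1/(n:ℝ)) * ∑ i, wgt x η₀ i * xdot x d i ^ 2) / 2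
        - ((1/(n:ℝ)) * ∑ i, wgt x η₀ i * |xdot x d i| ^ 3) / 6
      ≤ Lam x y (η₀ + d) - Lam x y η₀ - ∑ j, gradLam x y η₀ j * d j := by
    intro d
    rw [Q_repr]
    have hsum : ∀ i : Fin n,
        wgt x η₀ i * xdot x d i ^ 2 / 2 - wgt x η₀ i * |xdot x d i| ^ 3 / 6
          ≤ ll (xdot x η₀ i + xdot x d i) - ll (xdot x η₀ i)
              - logistic (xdot x η₀ i) * xdot x d i := by
      intro i
      calc wgt x η₀ i * xdot x d i ^ 2 / 2 - wgt x η₀ i * |xdot x d i| ^ 3 / 6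
          = logistic (xdot x η₀ i) * (1 - logistic (xdot x η₀ i))
              * ((xdot x d i)^2/2 - |xdot x d i|^3/6) := by unfold wgt; ring
        _ ≤ _ := key_ineq _ _
    calc ((1/(n:ℝ)) * ∑ i, wgt x η₀ i * xdot x d i ^ 2) / 2
          - ((1/(n:ℝ)) * ∑ i, wgt x η₀ i * |xdot x d i| ^ 3) / 6
        = (1/(n:ℝ)) * ∑ i, (wgt x η₀ i * xdot x d i ^ 2 / 2
            - wgt x η₀ i * |xdot x d i| ^ 3 / 6) := by
          rw [Finset.sum_sub_distrib, ← Finset.sum_div, ← Finset.sum_div]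
          ring
      _ ≤ (1/(n:ℝ)) * ∑ i, (ll (xdot x η₀ i + xdot x d i) - ll (xdot x η₀ i)
            - logistic (xdot x η₀ i) * xdot x d i) :=
          mul_le_mul_of_nonneg_left (Finset.sum_le_sum fun i _ => hsum i) h1n
  -- scaling inequality from convexity
  have scale : ∀ t : ℝ, 0 ≤ t → t ≤ 1 →
      Lam x y (η₀ + t • δ) - Lam x y η₀ - ∑ j, gradLam x y η₀ j * (t • δ) j
        ≤ t * (Lam x y (η₀ + δ) - Lam x y η₀ - ∑ j, gradLam x y η₀ j * δ j) := by
    intro t ht0 ht1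
    rw [Q_repr x y η₀ (t • δ), Q_repr x y η₀ δ]
    calc (1/(n:ℝ)) * ∑ i, (ll (xdot x η₀ i + xdot x (t • δ) i) - ll (xdot x η₀ i)
            - logistic (xdot x η₀ i) * xdot x (t • δ) i)
        ≤ (1/(n:ℝ)) * ∑ i, t * (ll (xdot x η₀ i + xdot x δ i) - ll (xdot x η₀ i)
            - logistic (xdot x η₀ i) * xdot x δ i) := by
          refine mul_le_mul_of_nonneg_left (Finset.sum_le_sum fun i _ => ?_) h1n
          rw [xdot_smul]
          exact D_scale _ _ t ht0 ht1
      _ = t * ((1/(n:ℝ)) * ∑ i, (ll (xdot x η₀ i + xdot x δ i) - ll (xdot x η₀ i)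
            - logistic (xdot x η₀ i) * xdot x δ i)) := by
          rw [← Finset.mul_sum]; ring
  set S2 := (1/(n:ℝ)) * ∑ i, wgt x η₀ i * xdot x δ i ^ 2 with hS2def
  set S3 := (1/(n:ℝ)) * ∑ i, wgt x η₀ i * |xdot x δ i| ^ 3 with hS3def
  set r := predNorm x (wgt x η₀) δ with hrdef
  have hS2nn : 0 ≤ S2 := mul_nonneg h1n
    (Finset.sum_nonneg fun i _ => mul_nonneg (hwnn i) (sq_nonneg _))
  have hr0 : 0 ≤ r := Real.sqrt_nonneg _
  have hr2 : r^2 = S2 := by rw [hrdef]; exact Real.sq_sqrt hS2nn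
  have hq3 : qbar * S3 ≤ r^3 := by
    have h := hq δ hδ
    rw [← hS2def, ← hS3def] at h
    have hrpow : S2 ^ ((3:ℝ)/2) = r^3 := by
      rw [← hr2, ← Real.rpow_natCast r 2, ← Real.rpow_mul hr0]
      norm_num
    rwa [hrpow] at h
  rcases le_or_gt r qbar with hcase|hcase
  · refine le_trans (min_le_left _ _) ?_
    have hcore := core δ
    rw [← hS2def, ← hS3def] at hcore
    have hS3le : S3 ≤ S2 := by
      have h7 : r^3 ≤ qbar * r^2 := by
        nlinarith [mul_le_mul_of_nonneg_right hcase (sq_nonneg r)]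
      nlinarith [hq3, h7, hr2, hqbar]
    nlinarith [hcore, hS3le, hr2]
  · refine le_trans (min_le_right _ _) ?_
    have hrpos : 0 < r := lt_trans hqbar hcase
    set t := qbar / r with htdef
    have ht0 : 0 < t := div_pos hqbar hrpos
    have ht1 : t ≤ 1 := by rw [htdef, div_le_one hrpos]; exact hcase.le
    have htr : t * r = qbar := div_mul_cancel₀ qbar hrpos.ne'
    have hcoret := core (t • δ)
    have e2 : (1/(n:ℝ)) * ∑ i, wgt x η₀ i * xdot x (t • δ) i ^ 2 = t^2 * S2 := by
      simp only [xdot_smul]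
      rw [hS2def]
      rw [show ∑ i, wgt x η₀ i * (t * xdot x δ i)^2
          = t^2 * ∑ i, wgt x η₀ i * xdot x δ i ^ 2 by
        rw [Finset.mul_sum]; exact Finset.sum_congr rfl fun i _ => by ring]
      ring
    have e3 : (1/(n:ℝ)) * ∑ i, wgt x η₀ i * |xdot x (t • δ) i| ^ 3 = t^3 * S3 := by
      simp only [xdot_smul]
      rw [hS3def]
      rw [show ∑ i, wgt x η₀ i * |t * xdot x δ i| ^ 3
          = t^3 * ∑ i, wgt x η₀ i * |xdot x δ i| ^ 3 by
        rw [Finset.mul_sum]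
        refine Finset.sum_congr rfl fun i _ => ?_
        rw [abs_mul, abs_of_pos ht0]; ring]
      ring
    rw [e2, e3] at hcoret
    have hscale := scale t ht0.le ht1
    have h9 : t^3 * r^3 = qbar^3 := by rw [← mul_pow, htr]
    have h10 : t^3 * S3 ≤ qbar^2 := by
      have h8 : t^3 * (qbar * S3) ≤ t^3 * r^3 := by
        exact mul_le_mul_of_nonneg_left hq3 (by positivity)
      nlinarith [h8, h9, hqbar]
    have h11 : t^2 * S2 = qbar^2 := by rw [← hr2, ← mul_pow, htr]
    have h12 : qbar^2/3 ≤ t * (Lam x y (η₀ + δ) - Lam x y η₀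
        - ∑ j, gradLam x y η₀ j * δ j) := by linarith [hcoret, hscale, h10, h11]
    have h13 : qbar/3 * r * t = qbar^2/3 := by
      rw [htdef]; field_simp
    nlinarith [h12, h13, ht0]
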